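/- (Process equivalence, Lemma 1.) Let c : ℂ → Fin k be a periodic k-coloring with fundamental parallelogram P_c, and let m ≥ 1, z_1, …, z_m ∈ ℂ and θ_1, …, θ_m ∈ ℝ be given (the j-th edge of a unit-distance graph embedded in the plane having endpoints z_j and z_j + e^{iθ_j}). Then for any two colors c₁, c₂ ∈ Fin k: (1/m) Σ_{j=1}^m (1/(2π·Area(P_c))) ∫_{P_c} ∫_0^{2π} 1[c(e^{iθ}·z_j + a) = c₁ and c(e^{iθ}·(z_j + e^{iθ_j}) + a) = c₂] dθ da = (1/(2π·Area(P_c))) ∫_{P_c} ∫_0^{2π} 1[c(a) = c₁ and c(a + e^{iθ}) = c₂] dθ da. In particular the left-hand side does not depend on the chosen points z_j and angles θ_j. -/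

import Mathlib

open MeasureTheory Real

noncomputable section

/-- The fundamental parallelogram `{t•u + s•v : 0 ≤ t, s < 1}` in `ℂ`. -/
def paraC (u v : ℂ) : Set ℂ :=
  {x | ∃ t s : ℝ, 0 ≤ t ∧ t < 1 ∧ 0 ≤ s ∧ s < 1 ∧ x = t • u + s • v}

namespace Stmt7Aux

variable {u v : ℂ}

def myB (huv : LinearIndependent ℝ ![u, v]) : Module.Basis (Fin 2) ℝ ℂ :=
  basisOfLinearIndependentOfCardEqFinrank huv (by simp [Complex.finrank_real_complex])

lemma paraC_eq (huv : LinearIndependent ℝ ![u, v]) :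
    paraC u v = ZSpan.fundamentalDomain (myB huv) := by
  have hB : ∀ i, myB huv i = ![u, v] i := fun i => by
    rw [myB, coe_basisOfLinearIndependentOfCardEqFinrank]
  have hB0 : myB huv 0 = u := hB 0
  have hB1 : myB huv 1 = v := hB 1
  ext x
  constructor
  · rintro ⟨t, s, ht0, ht1, hs0, hs1, rfl⟩
    intro i
    have : (myB huv).repr (t • u + s • v) i = t • ((myB huv).repr (myB huv 0)) i
        + s • ((myB huv).repr (myB huv 1)) i := by
      rw [hB0, hB1, map_add, _root_.map_smul, _root_.map_smul, Finsupp.add_apply,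
        Finsupp.smul_apply, Finsupp.smul_apply]
    rw [this]
    fin_cases i <;> simp [Module.Basis.repr_self, Finsupp.single_apply] <;>
      [exact ⟨ht0, ht1⟩; exact ⟨hs0, hs1⟩]
  · intro hx
    refine ⟨(myB huv).repr x 0, (myB huv).repr x 1, (hx 0).1, (hx 0).2, (hx 1).1, (hx 1).2, ?_⟩
    have := (myB huv).sum_repr x
    rw [Fin.sum_univ_two, hB0, hB1] at this
    exact this.symm

lemma paraC_measurable (huv : LinearIndependent ℝ ![u, v]) : MeasurableSet (paraC u v) := by
  rw [paraC_eq huv]; exact ZSpan.fundamentalDomain_measurableSet (myB huv)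

lemma paraC_vol_lt_top (huv : LinearIndependent ℝ ![u, v]) : volume (paraC u v) < ⊤ := by
  rw [paraC_eq huv]
  exact (ZSpan.fundamentalDomain_isBounded (myB huv)).measure_lt_top

lemma integral_translate (huv : LinearIndependent ℝ ![u, v]) (g : ℂ → ℝ)
    (hgu : ∀ x, g (x + u) = g x) (hgv : ∀ x, g (x + v) = g x) (w : ℂ) :
    ∫ a in paraC u v, g (a + w) = ∫ a in paraC u v, g a := by
  set B := myB huv with hBdef
  have hrange : Set.range (⇑B) = {u, v} := by
    rw [show ⇑B = ![u, v] from coe_basisOfLinearIndependentOfCardEqFinrank _ _]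
    ext x
    simp [Fin.exists_fin_two, or_comm]
  have key : ∀ y ∈ Submodule.span ℤ (Set.range ⇑B), ∀ x, g (x + y) = g x := by
    intro y hy
    refine Submodule.span_induction ?_ ?_ ?_ ?_ hy
    · intro y hy x
      rw [hrange] at hy
      rcases hy with rfl | rfl
      · exact hgu x
      · exact hgv x
    · intro x; simp
    · intro a b _ _ ha hb x
      rw [← add_assoc, hb, ha]
    · intro n a _ ha x
      induction n using Int.induction_on with
      | zero => simp
      | succ n ih =>
        have : ((n : ℤ) + 1) • a = (n : ℤ) • a + a := by rw [add_smul, one_smul]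
        rw [this, ← add_assoc, ha, ih]
      | pred n ih =>
        have : (-(n : ℤ) - 1) • a = (-(n : ℤ)) • a + (-a) := by rw [sub_smul, one_smul]; ring_nf
        rw [this, ← add_assoc]
        have := ha (x + (-(n:ℤ)) • a + -a)
        rw [add_assoc _ _ a, neg_add_cancel, add_zero] at this
        rw [← this, ih]
  haveI : Countable (Submodule.span ℤ (Set.range ⇑B)).toAddSubgroup :=
    inferInstanceAs (Countable (Submodule.span ℤ (Set.range ⇑B)))
  have hfd : IsAddFundamentalDomain (Submodule.span ℤ (Set.range ⇑B)).toAddSubgroup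
      (paraC u v) volume := by
    rw [paraC_eq huv]; exact ZSpan.isAddFundamentalDomain' B volume
  have hfd' : IsAddFundamentalDomain (Submodule.span ℤ (Set.range ⇑B)).toAddSubgroup
      ((fun x => x + w) ⁻¹' (paraC u v)) volume := by
    refine hfd.preimage_of_equiv (f := fun x => x + w)
      (measurePreserving_add_right volume w).quasiMeasurePreserving
      (e := id) Function.bijective_id ?_
    intro l x
    show ((l : ℂ) + x) + w = (l : ℂ) + (x + w)
    ring
  have h1 : ∫ a in paraC u v, g (a + w) = ∫ a in (fun x => x + w) ⁻¹' (paraC u v), g (a + w) := by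
    refine hfd.setIntegral_eq hfd' (f := fun a => g (a + w)) ?_
    intro l x
    show g (((l : ℂ) + x) + w) = g (x + w)
    have hl : (l : ℂ) ∈ Submodule.span ℤ (Set.range ⇑B) := l.2
    have := key (l : ℂ) hl (x + w)
    rw [show ((l : ℂ) + x) + w = (x + w) + (l : ℂ) by ring]
    exact this
  have h2 : ∫ a in (fun x => x + w) ⁻¹' (paraC u v), g (a + w) = ∫ a in paraC u v, g a :=
    (measurePreserving_add_right volume w).setIntegral_preimage_emb
      (MeasurableEquiv.addRight w).measurableEmbedding g _
  rw [h1, h2]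

variable {k : ℕ} (c : ℂ → Fin k)

lemma ind_integrable (hc : Measurable c) (huv : LinearIndependent ℝ ![u, v])
    {A B : ℂ × ℝ → ℂ} (hA : Measurable A) (hB : Measurable B) (c₁ c₂ : Fin k) :
    Integrable (fun p : ℂ × ℝ => if c (A p) = c₁ ∧ c (B p) = c₂ then (1:ℝ) else 0)
      ((volume.restrict (paraC u v)).prod (volume.restrict (Set.Ioc 0 (2*π)))) := by
  haveI : IsFiniteMeasure (volume.restrict (paraC u v)) :=
    ⟨by rw [Measure.restrict_apply_univ]; exact paraC_vol_lt_top huv⟩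
  haveI : IsFiniteMeasure (volume.restrict (Set.Ioc (0:ℝ) (2*π))) :=
    ⟨by rw [Measure.restrict_apply_univ]; exact measure_Ioc_lt_top⟩
  have hS : MeasurableSet {p : ℂ × ℝ | c (A p) = c₁ ∧ c (B p) = c₂} := by
    have h1 : MeasurableSet ((c ∘ A) ⁻¹' {c₁}) :=
      (hc.comp hA) (measurableSet_singleton c₁)
    have h2 : MeasurableSet ((c ∘ B) ⁻¹' {c₂}) :=
      (hc.comp hB) (measurableSet_singleton c₂)
    exact h1.inter h2
  have hmeas : Measurable (fun p : ℂ × ℝ =>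
      if c (A p) = c₁ ∧ c (B p) = c₂ then (1:ℝ) else 0) :=
    Measurable.ite hS measurable_const measurable_const
  refine (integrable_const (1:ℝ)).mono' hmeas.aestronglyMeasurable ?_
  filter_upwards with p
  by_cases h : c (A p) = c₁ ∧ c (B p) = c₂ <;> simp [h]


lemma core (hc : Measurable c) (huv : LinearIndependent ℝ ![u, v])
    (hper : ∀ x : ℂ, c (x + u) = c x ∧ c (x + v) = c x) (zj : ℂ) (φj : ℝ) (c₁ c₂ : Fin k) :
    ∫ a in paraC u v, ∫ θ in (0:ℝ)..(2*π),
        (if c (Complex.exp (θ * Complex.I) * zj + a) = c₁ ∧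
            c (Complex.exp (θ * Complex.I) * (zj + Complex.exp (φj * Complex.I)) + a)
              = c₂ then (1:ℝ) else 0)
      = ∫ a in paraC u v, ∫ θ in (0:ℝ)..(2*π),
        (if c a = c₁ ∧ c (a + Complex.exp (θ * Complex.I)) = c₂ then (1:ℝ) else 0) := by
  have h2π : (0:ℝ) ≤ 2*π := by positivity
  set F : ℂ → ℝ → ℝ := fun a θ =>
    if c (Complex.exp (θ * Complex.I) * zj + a) = c₁ ∧
        c (Complex.exp (θ * Complex.I) * (zj + Complex.exp (φj * Complex.I)) + a) = c₂
      then (1:ℝ) else 0 with hF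
  set G : ℂ → ℝ → ℝ := fun a θ =>
    if c a = c₁ ∧ c (a + Complex.exp (θ * Complex.I)) = c₂ then (1:ℝ) else 0 with hG
  set H : ℝ → ℝ := fun ψ => ∫ a in paraC u v, G a ψ with hH
  -- integrability
  have hFint : Integrable (Function.uncurry F)
      ((volume.restrict (paraC u v)).prod (volume.restrict (Set.Ioc 0 (2*π)))) := by
    have hA : Measurable (fun p : ℂ × ℝ => Complex.exp (p.2 * Complex.I) * zj + p.1) := by
      fun_prop
    have hB : Measurable (fun p : ℂ × ℝ =>
        Complex.exp (p.2 * Complex.I) * (zj + Complex.exp (φj * Complex.I)) + p.1) := by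
      fun_prop
    exact ind_integrable c hc huv hA hB c₁ c₂
  have hGint : Integrable (Function.uncurry G)
      ((volume.restrict (paraC u v)).prod (volume.restrict (Set.Ioc 0 (2*π)))) := by
    have hA : Measurable (fun p : ℂ × ℝ => p.1) := by fun_prop
    have hB : Measurable (fun p : ℂ × ℝ => p.1 + Complex.exp (p.2 * Complex.I)) := by
      fun_prop
    exact ind_integrable c hc huv hA hB c₁ c₂
  -- periodicity of H
  have hHper : Function.Periodic H (2*π) := by
    intro ψ
    simp only [hH]
    congr 1
    funext a
    have : Complex.exp ((↑(ψ + 2*π)) * Complex.I) = Complex.exp (ψ * Complex.I) := by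
      push_cast
      rw [add_mul, Complex.exp_add, Complex.exp_two_pi_mul_I, mul_one]
    simp only [hG, this]
  -- per-θ translation step
  have hstep : ∀ θ : ℝ, ∫ a in paraC u v, F a θ = H (θ + φj) := by
    intro θ
    set w : ℂ := Complex.exp (θ * Complex.I) * zj with hw
    set g : ℂ → ℝ := fun b =>
      if c b = c₁ ∧ c (b + Complex.exp (θ * Complex.I) * Complex.exp (φj * Complex.I)) = c₂
        then (1:ℝ) else 0 with hg
    have h1 : ∀ a, F a θ = g (a + w) := by
      intro a
      simp only [hF, hg]
      congr 2
      · rw [add_comm]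
      · congr 1; rw [hw]; ring
    have hgu : ∀ x, g (x + u) = g x := by
      intro x
      simp only [hg]
      rw [(hper x).1, show x + u + Complex.exp (θ * Complex.I) * Complex.exp (φj * Complex.I)
        = (x + Complex.exp (θ * Complex.I) * Complex.exp (φj * Complex.I)) + u by ring,
        (hper _).1]
    have hgv : ∀ x, g (x + v) = g x := by
      intro x
      simp only [hg]
      rw [(hper x).2, show x + v + Complex.exp (θ * Complex.I) * Complex.exp (φj * Complex.I)
        = (x + Complex.exp (θ * Complex.I) * Complex.exp (φj * Complex.I)) + v by ring,
        (hper _).2]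
    have h2 : ∀ b, g b = G b (θ + φj) := by
      intro b
      simp only [hg, hG]
      have : Complex.exp ((↑(θ + φj)) * Complex.I)
          = Complex.exp (θ * Complex.I) * Complex.exp (φj * Complex.I) := by
        push_cast
        rw [add_mul, Complex.exp_add]
      rw [this]
    calc ∫ a in paraC u v, F a θ = ∫ a in paraC u v, g (a + w) := by
          exact integral_congr_ae (Filter.Eventually.of_forall fun a => h1 a)
      _ = ∫ a in paraC u v, g a := integral_translate huv g hgu hgv w
      _ = H (θ + φj) := integral_congr_ae (Filter.Eventually.of_forall fun a => h2 a)
  calc ∫ a in paraC u v, ∫ θ in (0:ℝ)..(2*π), F a θ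
      = ∫ a in paraC u v, ∫ θ in Set.Ioc 0 (2*π), F a θ :=
        integral_congr_ae (Filter.Eventually.of_forall fun a =>
          intervalIntegral.integral_of_le h2π)
    _ = ∫ θ in Set.Ioc 0 (2*π), ∫ a in paraC u v, F a θ := integral_integral_swap hFint
    _ = ∫ θ in Set.Ioc 0 (2*π), H (θ + φj) :=
        integral_congr_ae (Filter.Eventually.of_forall fun θ => hstep θ)
    _ = ∫ θ in (0:ℝ)..(2*π), H (θ + φj) := (intervalIntegral.integral_of_le h2π).symm
    _ = ∫ θ in (0+φj:ℝ)..(2*π+φj), H θ := intervalIntegral.integral_comp_add_right H φj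
    _ = ∫ θ in (0:ℝ)..(2*π), H θ := by
        rw [zero_add, add_comm (2*π) φj]
        have := hHper.intervalIntegral_add_eq φj 0
        rw [zero_add] at this
        exact this
    _ = ∫ θ in Set.Ioc 0 (2*π), H θ := intervalIntegral.integral_of_le h2π
    _ = ∫ θ in Set.Ioc 0 (2*π), ∫ a in paraC u v, G a θ := rfl
    _ = ∫ a in paraC u v, ∫ θ in Set.Ioc 0 (2*π), G a θ := (integral_integral_swap hGint).symm
    _ = ∫ a in paraC u v, ∫ θ in (0:ℝ)..(2*π), G a θ :=
        integral_congr_ae (Filter.Eventually.of_forall fun a =>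
          (intervalIntegral.integral_of_le h2π).symm)

end Stmt7Aux

/-- Process equivalence (Lemma 1): throwing a random unit-distance graph with edges
`(z_j, z_j + e^{iφ_j})`, `1 ≤ j ≤ m`, on a periodically colored plane and picking a
uniformly random edge of it gives the color-pair probabilities of a uniformly random
needle; in particular the left-hand side does not depend on the `z_j`'s and `φ_j`'s. -/
theorem stmt7 (k : ℕ) (c : ℂ → Fin k) (hc : Measurable c) (u v : ℂ)
    (huv : LinearIndependent ℝ ![u, v])
    (hper : ∀ x : ℂ, c (x + u) = c x ∧ c (x + v) = c x)
    (m : ℕ) (hm : 1 ≤ m) (z : Fin m → ℂ) (φ : Fin m → ℝ) (c₁ c₂ : Fin k) :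
    (1 / (m : ℝ)) * ∑ j : Fin m, (1 / (2 * π * (volume (paraC u v)).toReal)) *
        ∫ a in paraC u v, ∫ θ in (0:ℝ)..(2*π),
          (if c (Complex.exp (θ * Complex.I) * z j + a) = c₁ ∧
              c (Complex.exp (θ * Complex.I) * (z j + Complex.exp (φ j * Complex.I)) + a)
                = c₂ then (1:ℝ) else 0)
      = (1 / (2 * π * (volume (paraC u v)).toReal)) *
        ∫ a in paraC u v, ∫ θ in (0:ℝ)..(2*π),
          (if c a = c₁ ∧ c (a + Complex.exp (θ * Complex.I)) = c₂ then (1:ℝ) else 0) := by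
  have hm0 : (m : ℝ) ≠ 0 := by
    have : 0 < m := hm
    positivity
  have hstep : ∀ j ∈ Finset.univ, (1 / (2 * π * (volume (paraC u v)).toReal)) *
        (∫ a in paraC u v, ∫ θ in (0:ℝ)..(2*π),
          (if c (Complex.exp (θ * Complex.I) * z j + a) = c₁ ∧
              c (Complex.exp (θ * Complex.I) * (z j + Complex.exp (φ j * Complex.I)) + a)
                = c₂ then (1:ℝ) else 0))
      = (1 / (2 * π * (volume (paraC u v)).toReal)) *
        ∫ a in paraC u v, ∫ θ in (0:ℝ)..(2*π),
          (if c a = c₁ ∧ c (a + Complex.exp (θ * Complex.I)) = c₂ then (1:ℝ) else 0) := by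
    intro j _
    rw [Stmt7Aux.core c hc huv hper (z j) (φ j) c₁ c₂]
  rw [Finset.sum_congr rfl hstep, Finset.sum_const, Finset.card_univ, Fintype.card_fin,
    nsmul_eq_mul, ← mul_assoc, one_div, inv_mul_cancel₀ hm0, one_mul]

end
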